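/- The map b ↦ 𝒜(b) from ℝ³ to the 3×3 real matrices (with 𝒜(0) := 0 and, for b ≠ 0, 𝒜(b) := (√(8π log 2)/√15) |b| (b ⊗ b)/|b|² + (4√(π log 2)/√15) |b| ( I − (b ⊗ b)/|b|² )) is globally Lipschitz continuous on ℝ³ and has linear growth: there exists L > 0 such that ‖𝒜(b) − 𝒜(b′)‖ ≤ L |b − b′| for all b, b′ ∈ ℝ³ and ‖𝒜(b)‖ ≤ L |b| for all b ∈ ℝ³. -/
import Mathlib


noncomputable section

/-- Euclidean norm on `ℝ³ = Fin 3 → ℝ`. -/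
def enorm3 (b : Fin 3 → ℝ) : ℝ := Real.sqrt (∑ i, (b i) ^ 2)

open scoped Classical in
/-- `𝒜(0) = 0` and, for `b ≠ 0`,
`𝒜(b) = (√(8π log 2)/√15)|b|(b⊗b)/|b|² + (4√(π log 2)/√15)|b|(I − (b⊗b)/|b|²)`. -/
def Amat (b : Fin 3 → ℝ) : Matrix (Fin 3) (Fin 3) ℝ :=
  if b = 0 then 0 else
    Matrix.of fun α β =>
      (Real.sqrt (8 * Real.pi * Real.log 2) / Real.sqrt 15) * enorm3 b *
          (b α * b β / enorm3 b ^ 2)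
        + (4 * Real.sqrt (Real.pi * Real.log 2) / Real.sqrt 15) * enorm3 b *
          ((if α = β then (1 : ℝ) else 0) - b α * b β / enorm3 b ^ 2)

lemma enorm3_nonneg (b : Fin 3 → ℝ) : 0 ≤ enorm3 b := Real.sqrt_nonneg _

lemma enorm3_pos {b : Fin 3 → ℝ} (hb : b ≠ 0) : 0 < enorm3 b := by
  have : 0 < ∑ i, (b i) ^ 2 := by
    obtain ⟨i, hi⟩ : ∃ i, b i ≠ 0 := by
      by_contra h
      push_neg at h
      exact hb (funext h)
    exact Finset.sum_pos' (fun j _ => sq_nonneg _)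
      ⟨i, Finset.mem_univ i, by positivity⟩
  exact Real.sqrt_pos.mpr this

lemma enorm3_zero : enorm3 (0 : Fin 3 → ℝ) = 0 := by
  simp [enorm3]

lemma abs_apply_le_enorm3 (b : Fin 3 → ℝ) (i : Fin 3) : |b i| ≤ enorm3 b := by
  rw [← Real.sqrt_sq_eq_abs]
  exact Real.sqrt_le_sqrt
    (Finset.single_le_sum (fun j _ => sq_nonneg (b j)) (Finset.mem_univ i))

lemma enorm3_eq_norm (b : Fin 3 → ℝ) :
    enorm3 b = ‖(WithLp.equiv 2 (Fin 3 → ℝ)).symm b‖ := by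
  rw [EuclideanSpace.norm_eq]
  simp [enorm3, sq_abs]

lemma enorm3_sub_abs_le (b b' : Fin 3 → ℝ) :
    |enorm3 b - enorm3 b'| ≤ enorm3 (b - b') := by
  rw [enorm3_eq_norm, enorm3_eq_norm, enorm3_eq_norm]
  exact abs_norm_sub_norm_le _ _

lemma enorm3_neg (b : Fin 3 → ℝ) : enorm3 (-b) = enorm3 b := by
  simp [enorm3]

/-- entrywise `b ⊗ b / |b|`. -/
def gmat (b : Fin 3 → ℝ) (α β : Fin 3) : ℝ := b α * b β / enorm3 b

open scoped Classical in
lemma Amat_eq (b : Fin 3 → ℝ) (α β : Fin 3) :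
    Amat b α β =
      (Real.sqrt (8 * Real.pi * Real.log 2) / Real.sqrt 15
        - 4 * Real.sqrt (Real.pi * Real.log 2) / Real.sqrt 15) * gmat b α β
      + (4 * Real.sqrt (Real.pi * Real.log 2) / Real.sqrt 15) * enorm3 b *
          (if α = β then (1 : ℝ) else 0) := by
  by_cases hb : b = 0
  · subst hb
    rw [Amat, if_pos rfl]
    simp [gmat, enorm3_zero]
  · rw [Amat, if_neg hb]
    have hn : enorm3 b ≠ 0 := ne_of_gt (enorm3_pos hb)
    simp only [Matrix.of_apply, gmat]
    rcases eq_or_ne α β with hab | hab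
    · simp only [if_pos hab]
      field_simp
      ring
    · simp only [if_neg hab]
      field_simp
      ring

lemma gmat_self_le (b : Fin 3 → ℝ) (α β : Fin 3) : |gmat b α β| ≤ enorm3 b := by
  by_cases hb : b = 0
  · subst hb; simp [gmat, enorm3_zero]
  · have hn : 0 < enorm3 b := enorm3_pos hb
    rw [gmat, abs_div, abs_of_pos hn, div_le_iff₀ hn, abs_mul]
    have h1 := abs_apply_le_enorm3 b α
    have h2 := abs_apply_le_enorm3 b β
    nlinarith [abs_nonneg (b α), abs_nonneg (b β)]

/-- asymmetric key estimate -/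
lemma gmat_lip_aux {b b' : Fin 3 → ℝ} (hb : b ≠ 0) (hb' : b' ≠ 0)
    (hle : enorm3 b' ≤ enorm3 b) (α β : Fin 3) :
    |gmat b α β - gmat b' α β| ≤ 3 * enorm3 (b - b') := by
  set n := enorm3 b with hn
  set n' := enorm3 b' with hn'
  set d := enorm3 (b - b') with hd
  have hnp : 0 < n := enorm3_pos hb
  have hnp' : 0 < n' := enorm3_pos hb'
  have hd0 : 0 ≤ d := enorm3_nonneg _
  have hda : |b α - b' α| ≤ d := by
    have := abs_apply_le_enorm3 (b - b') α
    simpa using this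
  have hdb : |b β - b' β| ≤ d := by
    have := abs_apply_le_enorm3 (b - b') β
    simpa using this
  have hnn : |n' - n| ≤ d := by
    calc |n' - n| ≤ enorm3 (b' - b) := enorm3_sub_abs_le b' b
      _ = enorm3 (b - b') := by rw [← enorm3_neg (b' - b)]; congr 1; abel
  have hba : |b α| ≤ n := abs_apply_le_enorm3 b α
  have hbb : |b β| ≤ n := abs_apply_le_enorm3 b β
  have hba' : |b' α| ≤ n' := abs_apply_le_enorm3 b' α
  have hbb' : |b' β| ≤ n' := abs_apply_le_enorm3 b' β
  have key : gmat b α β - gmat b' α β =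
      ((b α - b' α) * b β + b' α * (b β - b' β)) / n
      + b' α * b' β * (n' - n) / (n * n') := by
    rw [gmat, gmat, ← hn, ← hn']
    field_simp
    ring
  have h1 : |((b α - b' α) * b β + b' α * (b β - b' β)) / n| ≤ 2 * d := by
    rw [abs_div, abs_of_pos hnp, div_le_iff₀ hnp]
    have t1 : |(b α - b' α) * b β + b' α * (b β - b' β)|
        ≤ |b α - b' α| * |b β| + |b' α| * |b β - b' β| := by
      calc _ ≤ |(b α - b' α) * b β| + |b' α * (b β - b' β)| := abs_add_le _ _
        _ = _ := by rw [abs_mul, abs_mul]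
    nlinarith [mul_le_mul hda hbb (abs_nonneg _) hd0,
      mul_le_mul (hba'.trans hle) hdb (abs_nonneg _) hnp.le]
  have h2 : |b' α * b' β * (n' - n) / (n * n')| ≤ d := by
    rw [abs_div, abs_of_pos (mul_pos hnp hnp'), div_le_iff₀ (mul_pos hnp hnp')]
    have t1 : |b' α * b' β * (n' - n)| = |b' α| * |b' β| * |n' - n| := by
      rw [abs_mul, abs_mul]
    nlinarith [mul_le_mul (mul_le_mul hba' hbb' (abs_nonneg _) hnp'.le) hnn
      (abs_nonneg _) (by positivity : (0:ℝ) ≤ n' * n'),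
      mul_le_mul_of_nonneg_right (mul_le_mul_of_nonneg_right hle hnp'.le) hd0]
  calc |gmat b α β - gmat b' α β|
      ≤ |((b α - b' α) * b β + b' α * (b β - b' β)) / n|
        + |b' α * b' β * (n' - n) / (n * n')| := by rw [key]; exact abs_add_le _ _
    _ ≤ 2 * d + d := add_le_add h1 h2
    _ = 3 * d := by ring

lemma gmat_lip (b b' : Fin 3 → ℝ) (α β : Fin 3) :
    |gmat b α β - gmat b' α β| ≤ 3 * enorm3 (b - b') := by
  have hsub : enorm3 (b' - b) = enorm3 (b - b') := by
    rw [← enorm3_neg (b' - b)]; congr 1; abel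
  by_cases hb : b = 0
  · subst hb
    have : gmat 0 α β = 0 := by simp [gmat]
    rw [this, zero_sub, abs_neg]
    have h := gmat_self_le b' α β
    have : enorm3 ((0 : Fin 3 → ℝ) - b') = enorm3 b' := by
      rw [zero_sub, enorm3_neg]
    rw [this]
    nlinarith [enorm3_nonneg b']
  by_cases hb' : b' = 0
  · subst hb'
    have : gmat 0 α β = 0 := by simp [gmat]
    rw [this, sub_zero]
    have h := gmat_self_le b α β
    have : enorm3 (b - (0 : Fin 3 → ℝ)) = enorm3 b := by rw [sub_zero]
    rw [this]
    nlinarith [enorm3_nonneg b]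
  rcases le_total (enorm3 b') (enorm3 b) with hle | hle
  · exact gmat_lip_aux hb hb' hle α β
  · rw [abs_sub_comm, ← hsub]
    exact gmat_lip_aux hb' hb hle α β

/-- The map `b ↦ 𝒜(b)` is globally Lipschitz continuous and has linear
growth; the matrix norm is taken to be the entrywise sup norm (a fixed norm, equivalent to
the operator norm). -/
theorem Amat_lipschitz_linear_growth :
    ∃ L : ℝ, 0 < L ∧
      (∀ b b' : Fin 3 → ℝ, ∀ α β : Fin 3,
        |Amat b α β - Amat b' α β| ≤ L * enorm3 (b - b')) ∧
      (∀ b : Fin 3 → ℝ, ∀ α β : Fin 3, |Amat b α β| ≤ L * enorm3 b) := by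
  classical
  set c1 : ℝ := Real.sqrt (8 * Real.pi * Real.log 2) / Real.sqrt 15 with hc1
  set c2 : ℝ := 4 * Real.sqrt (Real.pi * Real.log 2) / Real.sqrt 15 with hc2
  have hc2nn : 0 ≤ c2 := by positivity
  refine ⟨3 * |c1 - c2| + c2 + 1, by positivity, ?_, ?_⟩
  · intro b b' α β
    have hd0 : 0 ≤ enorm3 (b - b') := enorm3_nonneg _
    have key : Amat b α β - Amat b' α β =
        (c1 - c2) * (gmat b α β - gmat b' α β)
        + c2 * (enorm3 b - enorm3 b') * (if α = β then (1:ℝ) else 0) := by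
      rw [Amat_eq b α β, Amat_eq b' α β, ← hc1, ← hc2]
      ring
    rw [key]
    have h1 : |(c1 - c2) * (gmat b α β - gmat b' α β)|
        ≤ |c1 - c2| * (3 * enorm3 (b - b')) := by
      rw [abs_mul]
      exact mul_le_mul_of_nonneg_left (gmat_lip b b' α β) (abs_nonneg _)
    have h2 : |c2 * (enorm3 b - enorm3 b') * (if α = β then (1:ℝ) else 0)|
        ≤ c2 * enorm3 (b - b') := by
      split_ifs with h
      · rw [mul_one, abs_mul, abs_of_nonneg hc2nn]
        exact mul_le_mul_of_nonneg_left (enorm3_sub_abs_le b b') hc2nn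
      · simp [mul_nonneg hc2nn hd0]
    calc |(c1 - c2) * (gmat b α β - gmat b' α β)
          + c2 * (enorm3 b - enorm3 b') * (if α = β then (1:ℝ) else 0)|
        ≤ |(c1 - c2) * (gmat b α β - gmat b' α β)|
          + |c2 * (enorm3 b - enorm3 b') * (if α = β then (1:ℝ) else 0)| := abs_add_le _ _
      _ ≤ |c1 - c2| * (3 * enorm3 (b - b')) + c2 * enorm3 (b - b') := add_le_add h1 h2
      _ ≤ (3 * |c1 - c2| + c2 + 1) * enorm3 (b - b') := by nlinarith
  · intro b α β
    have key : Amat b α β =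
        (c1 - c2) * gmat b α β + c2 * enorm3 b * (if α = β then (1:ℝ) else 0) := by
      rw [Amat_eq b α β, ← hc1, ← hc2]
    rw [key]
    have hn0 : 0 ≤ enorm3 b := enorm3_nonneg b
    have h1 : |(c1 - c2) * gmat b α β| ≤ |c1 - c2| * enorm3 b := by
      rw [abs_mul]
      exact mul_le_mul_of_nonneg_left (gmat_self_le b α β) (abs_nonneg _)
    have h2 : |c2 * enorm3 b * (if α = β then (1:ℝ) else 0)| ≤ c2 * enorm3 b := by
      split_ifs with h
      · rw [mul_one, abs_mul, abs_of_nonneg hc2nn, abs_of_nonneg hn0]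
      · simp [mul_nonneg hc2nn hn0]
    calc |(c1 - c2) * gmat b α β + c2 * enorm3 b * (if α = β then (1:ℝ) else 0)|
        ≤ |(c1 - c2) * gmat b α β|
          + |c2 * enorm3 b * (if α = β then (1:ℝ) else 0)| := abs_add_le _ _
      _ ≤ |c1 - c2| * enorm3 b + c2 * enorm3 b := add_le_add h1 h2
      _ ≤ (3 * |c1 - c2| + c2 + 1) * enorm3 b := by nlinarith [abs_nonneg (c1 - c2)]
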